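/- arXiv:1404.3808 — 2 statements merged into one kernel-verified Lean document; each statement's English description precedes it below -/
import Mathlib

section
/- Let D be a real m×m matrix such that Φ = I − DᵀD is positive definite, and hence Φ̄ = I − DDᵀ is positive definite. Let Φ^{1/2} and Φ̄^{1/2} denote the positive definite square roots of Φ and Φ̄, and Φ^{-1/2}, Φ̄^{-1/2} their inverses. Then for all vectors ξ̄ ∈ ℝ^m and w ∈ ℝ^m, defining ζ̄ = w + D ξ̄, ξ̌ = Φ^{1/2} ξ̄ − Φ^{-1/2} Dᵀ w, and ζ̌ = Φ̄^{-1/2} w, one has the identity ‖ξ̌‖² − ‖ζ̌‖² = ‖ξ̄‖² − ‖ζ̄‖². Consequently, along any trajectory, the integral quadratic constraint ∫₀^{T₀} (‖ξ̄(t)‖² − ‖ζ̄(t)‖²) dt ≤ c is equivalent to ∫₀^{T₀} (‖ξ̌(t)‖² − ‖ζ̌(t)‖²) dt ≤ c for every horizon T₀ ≥ 0 and constant c. -/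
open Matrix MeasureTheory

private lemma dp {m : ℕ} (A B : Matrix (Fin m) (Fin m) ℝ) (x y : Fin m → ℝ) :
    (A *ᵥ x) ⬝ᵥ (B *ᵥ y) = x ⬝ᵥ ((Aᵀ * B) *ᵥ y) := by
  rw [dotProduct_mulVec, ← vecMul_transpose, vecMul_vecMul, ← dotProduct_mulVec]

/-- Loop shifting preserves the normalized IQC integrand: with
`Φ = I - DᵀD ≻ 0`, `Φ̄ = I - DDᵀ ≻ 0`, positive definite square roots `P = Φ^{1/2}`,
`Q = Φ̄^{1/2}`, and `ζ̄ = w + Dξ̄`, `ξ̌ = Φ^{1/2}ξ̄ - Φ^{-1/2}Dᵀw`, `ζ̌ = Φ̄^{-1/2}w`, one has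
`‖ξ̌‖² - ‖ζ̌‖² = ‖ξ̄‖² - ‖ζ̄‖²` pointwise, and hence the two integral quadratic constraints
are equivalent along any trajectory (norms written as sums of squares). -/
theorem stmt5 (m : ℕ) (D : Matrix (Fin m) (Fin m) ℝ)
    (hΦ : (1 - Dᵀ * D).PosDef) (hΦbar : (1 - D * Dᵀ).PosDef)
    (P : Matrix (Fin m) (Fin m) ℝ) (hP : P.PosDef) (hP2 : P * P = 1 - Dᵀ * D)
    (Q : Matrix (Fin m) (Fin m) ℝ) (hQ : Q.PosDef) (hQ2 : Q * Q = 1 - D * Dᵀ) :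
    (∀ ξ w : Fin m → ℝ,
      (∑ i, (P *ᵥ ξ - P⁻¹ *ᵥ (Dᵀ *ᵥ w)) i ^ 2) - (∑ i, (Q⁻¹ *ᵥ w) i ^ 2) =
        (∑ i, ξ i ^ 2) - ∑ i, (w + D *ᵥ ξ) i ^ 2) ∧
    (∀ (ξ w : ℝ → Fin m → ℝ) (T₀ : ℝ), 0 ≤ T₀ → ∀ c : ℝ,
      ((∫ t in (0:ℝ)..T₀, ((∑ i, ξ t i ^ 2) - ∑ i, (w t + D *ᵥ ξ t) i ^ 2)) ≤ c ↔
        (∫ t in (0:ℝ)..T₀,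
          ((∑ i, (P *ᵥ ξ t - P⁻¹ *ᵥ (Dᵀ *ᵥ w t)) i ^ 2) -
            ∑ i, (Q⁻¹ *ᵥ w t) i ^ 2)) ≤ c)) := by
  -- basic invertibility facts
  have hPd : IsUnit P.det := hP.det_pos.ne'.isUnit
  have hQd : IsUnit Q.det := hQ.det_pos.ne'.isUnit
  have hΦd : IsUnit (1 - Dᵀ * D).det := hΦ.det_pos.ne'.isUnit
  have hΦbd : IsUnit (1 - D * Dᵀ).det := hΦbar.det_pos.ne'.isUnit
  have hPt : Pᵀ = P := by
    have := hP.isHermitian.eq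
    simpa [conjTranspose, Matrix.map, transpose] using this
  have hQt : Qᵀ = Q := by
    have := hQ.isHermitian.eq
    simpa [conjTranspose, Matrix.map, transpose] using this
  have hPinv2 : P⁻¹ * P⁻¹ = (1 - Dᵀ * D)⁻¹ := by
    rw [← hP2, Matrix.mul_inv_rev]
  have hQinv2 : Q⁻¹ * Q⁻¹ = (1 - D * Dᵀ)⁻¹ := by
    rw [← hQ2, Matrix.mul_inv_rev]
  have hΦinv : (1 - Dᵀ * D) * (1 - Dᵀ * D)⁻¹ = 1 := Matrix.mul_nonsing_inv _ hΦd
  -- the key matrix identity `Φ̄⁻¹ = 1 + D Φ⁻¹ Dᵀ`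
  have key : (1 - D * Dᵀ)⁻¹ = 1 + D * (1 - Dᵀ * D)⁻¹ * Dᵀ := by
    apply Matrix.inv_eq_right_inv
    have expand : (1 - D * Dᵀ) * (1 + D * (1 - Dᵀ * D)⁻¹ * Dᵀ) =
        1 + D * ((1 - Dᵀ * D) * (1 - Dᵀ * D)⁻¹ - 1) * Dᵀ := by
      noncomm_ring
    rw [expand, hΦinv]
    simp
  have hsum : ∀ v : Fin m → ℝ, ∑ i, v i ^ 2 = v ⬝ᵥ v := by
    intro v; simp [dotProduct, sq]
  have h1 : ∀ ξ w : Fin m → ℝ,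
      (∑ i, (P *ᵥ ξ - P⁻¹ *ᵥ (Dᵀ *ᵥ w)) i ^ 2) - (∑ i, (Q⁻¹ *ᵥ w) i ^ 2) =
        (∑ i, ξ i ^ 2) - ∑ i, (w + D *ᵥ ξ) i ^ 2 := by
    intro ξ w
    rw [hsum, hsum, hsum, hsum]
    rw [show P⁻¹ *ᵥ (Dᵀ *ᵥ w) = (P⁻¹ * Dᵀ) *ᵥ w from Matrix.mulVec_mulVec _ _ _]
    rw [sub_dotProduct, dotProduct_sub, dotProduct_sub,
      add_dotProduct, dotProduct_add, dotProduct_add,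
      dp P P ξ ξ, dp P (P⁻¹ * Dᵀ) ξ w, dp (P⁻¹ * Dᵀ) P w ξ,
      dp (P⁻¹ * Dᵀ) (P⁻¹ * Dᵀ) w w, dp (Q⁻¹) (Q⁻¹) w w, dp D D ξ ξ]
    have hm1 : Pᵀ * P = 1 - Dᵀ * D := by rw [hPt, hP2]
    have hm2 : Pᵀ * (P⁻¹ * Dᵀ) = Dᵀ := by
      rw [hPt, ← Matrix.mul_assoc, Matrix.mul_nonsing_inv _ hPd, Matrix.one_mul]
    have hPit : (P⁻¹ * Dᵀ)ᵀ = D * P⁻¹ := by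
      rw [Matrix.transpose_mul, Matrix.transpose_transpose, Matrix.transpose_nonsing_inv, hPt]
    have hm3 : (P⁻¹ * Dᵀ)ᵀ * P = D := by
      rw [hPit, Matrix.mul_assoc, Matrix.nonsing_inv_mul _ hPd, Matrix.mul_one]
    have hm4 : (P⁻¹ * Dᵀ)ᵀ * (P⁻¹ * Dᵀ) = D * (1 - Dᵀ * D)⁻¹ * Dᵀ := by
      rw [hPit, Matrix.mul_assoc, ← Matrix.mul_assoc P⁻¹, hPinv2, Matrix.mul_assoc,
        ← Matrix.mul_assoc]
    have hm5 : Q⁻¹ᵀ * Q⁻¹ = 1 + D * (1 - Dᵀ * D)⁻¹ * Dᵀ := by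
      rw [Matrix.transpose_nonsing_inv, hQt, hQinv2, key]
    rw [hm1, hm2, hm3, hm4, hm5]
    have cross : ξ ⬝ᵥ (Dᵀ *ᵥ w) = w ⬝ᵥ (D *ᵥ ξ) := by
      rw [dotProduct_mulVec, vecMul_transpose, dotProduct_comm]
    have cross2 : (D *ᵥ ξ) ⬝ᵥ w = w ⬝ᵥ (D *ᵥ ξ) := dotProduct_comm _ _
    rw [cross, cross2]
    rw [Matrix.sub_mulVec, Matrix.one_mulVec, dotProduct_sub,
      Matrix.add_mulVec, Matrix.one_mulVec, dotProduct_add]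
    ring
  refine ⟨h1, ?_⟩
  intro ξ w T₀ _ c
  constructor <;> intro h <;> [skip; skip] <;>
    · have : (∫ t in (0:ℝ)..T₀,
          ((∑ i, (P *ᵥ ξ t - P⁻¹ *ᵥ (Dᵀ *ᵥ w t)) i ^ 2) -
            ∑ i, (Q⁻¹ *ᵥ w t) i ^ 2)) =
          ∫ t in (0:ℝ)..T₀, ((∑ i, ξ t i ^ 2) - ∑ i, (w t + D *ᵥ ξ t) i ^ 2) := by
        congr 1
        funext t
        exact h1 (ξ t) (w t)
      first
      | (rw [this]; exact h)
      | (rw [this] at h; exact h)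
end

section
/- Consider real matrices A ∈ ℝ^{n×n}, B₂ ∈ ℝ^{n×m}, families B₁ⱼ ∈ ℝ^{n×pⱼ}, C₁ⱼ ∈ ℝ^{qⱼ×n}, D₁ⱼ ∈ ℝ^{qⱼ×m} for j = 1,…,k and B̌₂ᵢ ∈ ℝ^{n×rᵢ}, Č₂ᵢ ∈ ℝ^{sᵢ×n}, Ď₂ᵢ ∈ ℝ^{sᵢ×m} for i = 1,…,g, positive definite R ∈ ℝ^{n×n} and G ∈ ℝ^{m×m}, and multipliers τ₁,…,τ_k > 0. Define G_τ = G + Σⱼ τⱼ D₁ⱼᵀD₁ⱼ + Σᵢ Ď₂ᵢᵀĎ₂ᵢ, Q_τ = R + Σⱼ τⱼ C₁ⱼᵀC₁ⱼ + Σᵢ Č₂ᵢᵀČ₂ᵢ, L_τ = Σⱼ τⱼ C₁ⱼᵀD₁ⱼ + Σᵢ Č₂ᵢᵀĎ₂ᵢ, and W_τ = Σⱼ (1/τⱼ) B₁ⱼB₁ⱼᵀ + Σᵢ B̌₂ᵢB̌₂ᵢᵀ. Suppose the symmetric matrix X ∈ ℝ^{n×n} satisfies the algebraic Riccati equation (A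 − B₂G_τ⁻¹L_τᵀ)ᵀX + X(A − B₂G_τ⁻¹L_τᵀ) + X(W_τ − B₂G_τ⁻¹B₂ᵀ)X + Q_τ − L_τ G_τ⁻¹ L_τᵀ = 0, and let K = −G_τ⁻¹(B₂ᵀX + L_τᵀ). Then for all x ∈ ℝⁿ, ξⱼ ∈ ℝ^{pⱼ} (j = 1,…,k) and ηᵢ ∈ ℝ^{rᵢ} (i = 1,…,g), with u = Kx, the following dissipation inequality holds: 2 xᵀ X (A x + Σⱼ B₁ⱼ ξⱼ + Σᵢ B̌₂ᵢ ηᵢ + B₂ u) + xᵀ R x + uᵀ G u + Σⱼ τⱼ ( ‖C₁ⱼ x + D₁ⱼ u‖² − ‖ξⱼ‖² ) + Σᵢ ( ‖Č₂ᵢ x + Ď₂ᵢ u‖² − ‖ηᵢ‖² ) ≤ 0. -/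
open Matrix

private lemma dp_swap' {a b : Type*} [Fintype a] [Fintype b]
    (M : Matrix a b ℝ) (v : a → ℝ) (w : b → ℝ) :
    v ⬝ᵥ (M *ᵥ w) = (Mᵀ *ᵥ v) ⬝ᵥ w := by
  rw [Matrix.mulVec_transpose, Matrix.dotProduct_mulVec]

private lemma dp_swap {a b : Type*} [Fintype a] [Fintype b]
    (M : Matrix a b ℝ) (v : b → ℝ) (w : a → ℝ) :
    (M *ᵥ v) ⬝ᵥ w = v ⬝ᵥ (Mᵀ *ᵥ w) := by
  rw [dotProduct_comm, dp_swap', dotProduct_comm]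

private lemma dp_self_nonneg {a : Type*} [Fintype a] (v : a → ℝ) : 0 ≤ v ⬝ᵥ v :=
  Finset.sum_nonneg fun i _ => mul_self_nonneg _

private lemma sumsq {a : Type*} [Fintype a] (v : a → ℝ) : ∑ i, v i ^ 2 = v ⬝ᵥ v := by
  simp [dotProduct, sq]

private lemma mulVec_sum' {a b ι : Type*} [Fintype a] [Fintype b] (s : Finset ι)
    (M : Matrix a b ℝ) (v : ι → b → ℝ) :
    M *ᵥ (∑ i ∈ s, v i) = ∑ i ∈ s, M *ᵥ v i := by
  classical
  induction s using Finset.induction with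
  | empty => simp [Matrix.mulVec_zero]
  | insert _ _ h ih => simp [Finset.sum_insert h, Matrix.mulVec_add, ih]

private lemma sum_mulVec' {a b ι : Type*} [Fintype a] [Fintype b] (s : Finset ι)
    (M : ι → Matrix a b ℝ) (v : b → ℝ) :
    (∑ i ∈ s, M i) *ᵥ v = ∑ i ∈ s, M i *ᵥ v := by
  classical
  induction s using Finset.induction with
  | empty => simp
  | insert _ _ h ih => simp [Finset.sum_insert h, Matrix.add_mulVec, ih]

private lemma dp_sum {a ι : Type*} [Fintype a] (s : Finset ι) (v : a → ℝ) (w : ι → a → ℝ) :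
    v ⬝ᵥ (∑ i ∈ s, w i) = ∑ i ∈ s, v ⬝ᵥ w i := by
  classical
  induction s using Finset.induction with
  | empty => simp
  | insert _ _ h ih => simp [Finset.sum_insert h, dotProduct_add, ih]

private lemma psd_smul' {a : Type*} [Fintype a] {c : ℝ} (hc : 0 ≤ c)
    {M : Matrix a a ℝ} (hM : M.PosSemidef) : (c • M).PosSemidef := by
  refine ⟨?_, fun v => ?_⟩
  · have h1 := hM.1
    simp only [Matrix.IsHermitian, Matrix.conjTranspose_smul] at h1 ⊢
    rw [h1]
    congr 1
  · have h2 := hM.2 v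
    refine le_of_le_of_eq (mul_nonneg hc h2) ?_
    unfold Finsupp.sum; rw [Finset.mul_sum]; refine Finset.sum_congr rfl fun i _ => ?_
    rw [Finset.mul_sum]; refine Finset.sum_congr rfl fun j _ => ?_
    simp only [Matrix.smul_apply, smul_eq_mul]; ring

private lemma psd_sum' {a ι : Type*} [Fintype a] (s : Finset ι)
    (f : ι → Matrix a a ℝ) (h : ∀ i ∈ s, (f i).PosSemidef) :
    (∑ i ∈ s, f i).PosSemidef :=
  Finset.sum_induction f _ (fun _ _ ha hb => ha.add hb) Matrix.PosSemidef.zero h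

private lemma qform_two {a : Type*} [Fintype a] {X : Matrix a a ℝ} (hX : Xᵀ = X)
    (N : Matrix a a ℝ) (x : a → ℝ) :
    2 * ((X *ᵥ x) ⬝ᵥ (N *ᵥ x)) = x ⬝ᵥ ((Nᵀ * X + X * N) *ᵥ x) := by
  have h1 : (X *ᵥ x) ⬝ᵥ (N *ᵥ x) = x ⬝ᵥ ((X * N) *ᵥ x) := by
    rw [dp_swap X x (N *ᵥ x), hX, Matrix.mulVec_mulVec]
  have h2 : (X *ᵥ x) ⬝ᵥ (N *ᵥ x) = x ⬝ᵥ ((Nᵀ * X) *ᵥ x) := by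
    rw [dp_swap' N (X *ᵥ x) x, Matrix.mulVec_mulVec, dotProduct_comm]
  rw [Matrix.add_mulVec, dotProduct_add, ← h1, ← h2]; ring

private lemma qform_sq {a b : Type*} [Fintype a] [Fintype b] (S : Matrix b a ℝ) (x : a → ℝ) :
    (S *ᵥ x) ⬝ᵥ (S *ᵥ x) = x ⬝ᵥ ((Sᵀ * S) *ᵥ x) := by
  rw [dp_swap S x (S *ᵥ x), Matrix.mulVec_mulVec]

private lemma qform_KGK {a b : Type*} [Fintype a] [Fintype b]
    (K : Matrix b a ℝ) (G : Matrix b b ℝ) (x : a → ℝ) :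
    (K *ᵥ x) ⬝ᵥ (G *ᵥ (K *ᵥ x)) = x ⬝ᵥ ((Kᵀ * (G * K)) *ᵥ x) := by
  rw [Matrix.mulVec_mulVec, dp_swap K x _, Matrix.mulVec_mulVec]

private lemma qform_smul {a : Type*} [Fintype a] (c : ℝ) (M : Matrix a a ℝ) (x : a → ℝ) :
    c * (x ⬝ᵥ (M *ᵥ x)) = x ⬝ᵥ ((c • M) *ᵥ x) := by
  rw [Matrix.smul_mulVec, dotProduct_smul, smul_eq_mul]

set_option maxHeartbeats 1000000 in
/-- Pointwise completion-of-squares (dissipation) inequality for the minimax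
LQR controller: if the symmetric matrix `X` solves the algebraic Riccati equation for the data
`(A, B₂, B₁ⱼ, C₁ⱼ, D₁ⱼ, B̌₂ᵢ, Č₂ᵢ, Ď₂ᵢ, R, G, τ)` and `K = -Gτ⁻¹(B₂ᵀX + Lτᵀ)`, then for all
`x`, `ξⱼ`, `ηᵢ` and `u = Kx`,
`2xᵀX ẋ + xᵀRx + uᵀGu + Σⱼ τⱼ(‖C₁ⱼx + D₁ⱼu‖² - ‖ξⱼ‖²) + Σᵢ(‖Č₂ᵢx + Ď₂ᵢu‖² - ‖ηᵢ‖²) ≤ 0`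
(Euclidean norms written as sums of squares). -/
theorem stmt8 (n m k g : ℕ) (p q : Fin k → ℕ) (r s : Fin g → ℕ)
    (A : Matrix (Fin n) (Fin n) ℝ) (B₂ : Matrix (Fin n) (Fin m) ℝ)
    (B₁ : ∀ j : Fin k, Matrix (Fin n) (Fin (p j)) ℝ)
    (C₁ : ∀ j : Fin k, Matrix (Fin (q j)) (Fin n) ℝ)
    (D₁ : ∀ j : Fin k, Matrix (Fin (q j)) (Fin m) ℝ)
    (B₂' : ∀ i : Fin g, Matrix (Fin n) (Fin (r i)) ℝ)
    (C₂ : ∀ i : Fin g, Matrix (Fin (s i)) (Fin n) ℝ)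
    (D₂ : ∀ i : Fin g, Matrix (Fin (s i)) (Fin m) ℝ)
    (R : Matrix (Fin n) (Fin n) ℝ) (hR : R.PosDef)
    (G : Matrix (Fin m) (Fin m) ℝ) (hG : G.PosDef)
    (τ : Fin k → ℝ) (hτ : ∀ j, 0 < τ j)
    (Gτ : Matrix (Fin m) (Fin m) ℝ)
    (hGτ : Gτ = G + (∑ j, τ j • ((D₁ j)ᵀ * D₁ j)) + ∑ i, (D₂ i)ᵀ * D₂ i)
    (Qτ : Matrix (Fin n) (Fin n) ℝ)
    (hQτ : Qτ = R + (∑ j, τ j • ((C₁ j)ᵀ * C₁ j)) + ∑ i, (C₂ i)ᵀ * C₂ i)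
    (Lτ : Matrix (Fin n) (Fin m) ℝ)
    (hLτ : Lτ = (∑ j, τ j • ((C₁ j)ᵀ * D₁ j)) + ∑ i, (C₂ i)ᵀ * D₂ i)
    (Wτ : Matrix (Fin n) (Fin n) ℝ)
    (hWτ : Wτ = (∑ j, (τ j)⁻¹ • (B₁ j * (B₁ j)ᵀ)) + ∑ i, B₂' i * (B₂' i)ᵀ)
    (X : Matrix (Fin n) (Fin n) ℝ) (hXsymm : X.IsSymm)
    (hRic : (A - B₂ * Gτ⁻¹ * Lτᵀ)ᵀ * X + X * (A - B₂ * Gτ⁻¹ * Lτᵀ) +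
      X * (Wτ - B₂ * Gτ⁻¹ * B₂ᵀ) * X + Qτ - Lτ * Gτ⁻¹ * Lτᵀ = 0)
    (K : Matrix (Fin m) (Fin n) ℝ) (hK : K = -(Gτ⁻¹ * (B₂ᵀ * X + Lτᵀ))) :
    ∀ (x : Fin n → ℝ) (ξ : ∀ j : Fin k, Fin (p j) → ℝ) (η : ∀ i : Fin g, Fin (r i) → ℝ),
      2 * (x ⬝ᵥ (X *ᵥ (A *ᵥ x + (∑ j, B₁ j *ᵥ ξ j) + (∑ i, B₂' i *ᵥ η i) +
            B₂ *ᵥ (K *ᵥ x)))) +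
        x ⬝ᵥ (R *ᵥ x) + (K *ᵥ x) ⬝ᵥ (G *ᵥ (K *ᵥ x)) +
        (∑ j, τ j * ((∑ a, ((C₁ j *ᵥ x + D₁ j *ᵥ (K *ᵥ x)) a) ^ 2) - ∑ a, ξ j a ^ 2)) +
        (∑ i, ((∑ a, ((C₂ i *ᵥ x + D₂ i *ᵥ (K *ᵥ x)) a) ^ 2) - ∑ a, η i a ^ 2)) ≤ 0 := by
  have hXs : Xᵀ = X := hXsymm
  -- symmetry of G and Gτ
  have hGsym : Gᵀ = G := by
    rw [← Matrix.conjTranspose_eq_transpose_of_trivial]; exact hG.isHermitian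
  have hGτsym : Gτᵀ = Gτ := by
    rw [hGτ]
    simp [Matrix.transpose_add, Matrix.transpose_sum, Matrix.transpose_smul,
      Matrix.transpose_mul, Matrix.transpose_transpose, hGsym]
  -- positive definiteness and invertibility of Gτ
  have hGτpd : Gτ.PosDef := by
    rw [hGτ]
    refine Matrix.PosDef.add_posSemidef (Matrix.PosDef.add_posSemidef hG ?_) ?_
    · refine psd_sum' _ _ fun j _ => psd_smul' (hτ j).le ?_
      have := Matrix.posSemidef_conjTranspose_mul_self (D₁ j)
      rwa [Matrix.conjTranspose_eq_transpose_of_trivial] at this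
    · refine psd_sum' _ _ fun i _ => ?_
      have := Matrix.posSemidef_conjTranspose_mul_self (D₂ i)
      rwa [Matrix.conjTranspose_eq_transpose_of_trivial] at this
  have hdet : IsUnit Gτ.det := hGτpd.det_pos.ne'.isUnit
  have hGi2 : Gτ⁻¹ * Gτ = 1 := Matrix.nonsing_inv_mul _ hdet
  have hGisym : Gτ⁻¹ᵀ = Gτ⁻¹ := by rw [Matrix.transpose_nonsing_inv, hGτsym]
  -- matrix facts about K
  have hP : (X * B₂ + Lτ)ᵀ = B₂ᵀ * X + Lτᵀ := by
    rw [Matrix.transpose_add, Matrix.transpose_mul, hXs]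
  have hK' : K = -(Gτ⁻¹ * (X * B₂ + Lτ)ᵀ) := by rw [hP, hK]
  have hKT : Kᵀ = -((X * B₂ + Lτ) * Gτ⁻¹) := by
    rw [hK']
    simp [Matrix.transpose_neg, Matrix.transpose_mul, Matrix.transpose_transpose, hGisym]
  have hKGK : Kᵀ * Gτ * K = (X * B₂ + Lτ) * Gτ⁻¹ * (X * B₂ + Lτ)ᵀ := by
    rw [hKT, hK']
    calc -((X * B₂ + Lτ) * Gτ⁻¹) * Gτ * -(Gτ⁻¹ * (X * B₂ + Lτ)ᵀ)
        = (X * B₂ + Lτ) * ((Gτ⁻¹ * Gτ) * (Gτ⁻¹ * (X * B₂ + Lτ)ᵀ)) := by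
          simp only [Matrix.neg_mul, Matrix.mul_neg, neg_neg, Matrix.mul_assoc]
      _ = (X * B₂ + Lτ) * Gτ⁻¹ * (X * B₂ + Lτ)ᵀ := by
          rw [hGi2, Matrix.one_mul, Matrix.mul_assoc]
  -- the central matrix identity
  have hric' : Aᵀ * X + X * A + X * Wτ * X + Qτ -
      (X * B₂ + Lτ) * Gτ⁻¹ * (X * B₂ + Lτ)ᵀ = 0 := by
    rw [← hRic, hP]
    simp only [Matrix.transpose_sub, Matrix.transpose_mul, Matrix.transpose_transpose, hGisym,
      hXs, Matrix.mul_sub, Matrix.sub_mul, Matrix.mul_add, Matrix.add_mul, Matrix.mul_assoc]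
    abel
  have hM0 : Aᵀ * X + X * A + X * Wτ * X + Qτ + (X * B₂ + Lτ) * K +
      Kᵀ * (X * B₂ + Lτ)ᵀ + Kᵀ * Gτ * K = 0 := by
    have e1 : (X * B₂ + Lτ) * K = -((X * B₂ + Lτ) * Gτ⁻¹ * (X * B₂ + Lτ)ᵀ) := by
      rw [hK']
      simp only [Matrix.mul_neg, Matrix.mul_assoc]
    have e2 : Kᵀ * (X * B₂ + Lτ)ᵀ = -((X * B₂ + Lτ) * Gτ⁻¹ * (X * B₂ + Lτ)ᵀ) := by
      rw [hKT]
      simp only [Matrix.neg_mul, Matrix.mul_assoc]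
    rw [e1, e2, hKGK]
    calc Aᵀ * X + X * A + X * Wτ * X + Qτ +
          -((X * B₂ + Lτ) * Gτ⁻¹ * (X * B₂ + Lτ)ᵀ) +
          -((X * B₂ + Lτ) * Gτ⁻¹ * (X * B₂ + Lτ)ᵀ) +
          (X * B₂ + Lτ) * Gτ⁻¹ * (X * B₂ + Lτ)ᵀ
        = Aᵀ * X + X * A + X * Wτ * X + Qτ -
          (X * B₂ + Lτ) * Gτ⁻¹ * (X * B₂ + Lτ)ᵀ := by abel
      _ = 0 := hric'
  -- scalar part
  intro x ξ η
  simp only [sumsq]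
  set u := K *ᵥ x with hu
  have hxXv : ∀ v : Fin n → ℝ, x ⬝ᵥ (X *ᵥ v) = (X *ᵥ x) ⬝ᵥ v := fun v => by
    rw [dp_swap' X x v, hXs]
  have expand : x ⬝ᵥ (X *ᵥ (A *ᵥ x + (∑ j, B₁ j *ᵥ ξ j) + (∑ i, B₂' i *ᵥ η i) + B₂ *ᵥ u))
      = (X *ᵥ x) ⬝ᵥ (A *ᵥ x) + (∑ j, (X *ᵥ x) ⬝ᵥ (B₁ j *ᵥ ξ j))
        + (∑ i, (X *ᵥ x) ⬝ᵥ (B₂' i *ᵥ η i)) + (X *ᵥ x) ⬝ᵥ (B₂ *ᵥ u) := by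
    rw [hxXv, dotProduct_add, dotProduct_add, dotProduct_add, dp_sum, dp_sum]
  rw [expand]
  -- abbreviations
  set w : ∀ j : Fin k, Fin (p j) → ℝ := fun j => (B₁ j)ᵀ *ᵥ (X *ᵥ x) with hw
  set w' : ∀ i : Fin g, Fin (r i) → ℝ := fun i => (B₂' i)ᵀ *ᵥ (X *ᵥ x) with hw'
  have hwj : ∀ j, (X *ᵥ x) ⬝ᵥ (B₁ j *ᵥ ξ j) = w j ⬝ᵥ ξ j := fun j =>
    dp_swap' (B₁ j) _ _
  have hwi : ∀ i, (X *ᵥ x) ⬝ᵥ (B₂' i *ᵥ η i) = w' i ⬝ᵥ η i := fun i =>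
    dp_swap' (B₂' i) _ _
  -- completion-of-squares inequalities
  have hjle : ∀ j, 2 * (w j ⬝ᵥ ξ j) - τ j * (ξ j ⬝ᵥ ξ j) ≤ (τ j)⁻¹ * (w j ⬝ᵥ w j) := by
    intro j
    have hτj := hτ j
    have h0 : 0 ≤ (ξ j - (τ j)⁻¹ • w j) ⬝ᵥ (ξ j - (τ j)⁻¹ • w j) := dp_self_nonneg _
    have hde : (ξ j - (τ j)⁻¹ • w j) ⬝ᵥ (ξ j - (τ j)⁻¹ • w j)
        = ξ j ⬝ᵥ ξ j - 2 * (τ j)⁻¹ * (w j ⬝ᵥ ξ j) + (τ j)⁻¹ ^ 2 * (w j ⬝ᵥ w j) := by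
      simp only [sub_dotProduct, dotProduct_sub, smul_dotProduct, dotProduct_smul,
        dotProduct_comm (ξ j) (w j), smul_eq_mul]
      ring
    have key : τ j * ((ξ j - (τ j)⁻¹ • w j) ⬝ᵥ (ξ j - (τ j)⁻¹ • w j))
        = τ j * (ξ j ⬝ᵥ ξ j) - 2 * (w j ⬝ᵥ ξ j) + (τ j)⁻¹ * (w j ⬝ᵥ w j) := by
      rw [hde]; field_simp
    nlinarith [mul_nonneg hτj.le h0]
  have hile : ∀ i, 2 * (w' i ⬝ᵥ η i) - η i ⬝ᵥ η i ≤ w' i ⬝ᵥ w' i := by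
    intro i
    have h0 : 0 ≤ (η i - w' i) ⬝ᵥ (η i - w' i) := dp_self_nonneg _
    have hde : (η i - w' i) ⬝ᵥ (η i - w' i)
        = η i ⬝ᵥ η i - 2 * (w' i ⬝ᵥ η i) + w' i ⬝ᵥ w' i := by
      simp only [sub_dotProduct, dotProduct_sub, dotProduct_comm (η i) (w' i)]
      ring
    linarith [hde ▸ h0]
  -- regroup
  have regroup :
      2 * ((X *ᵥ x) ⬝ᵥ (A *ᵥ x) + (∑ j, (X *ᵥ x) ⬝ᵥ (B₁ j *ᵥ ξ j))
          + (∑ i, (X *ᵥ x) ⬝ᵥ (B₂' i *ᵥ η i)) + (X *ᵥ x) ⬝ᵥ (B₂ *ᵥ u)) +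
        x ⬝ᵥ (R *ᵥ x) + u ⬝ᵥ (G *ᵥ u) +
        (∑ j, τ j * ((C₁ j *ᵥ x + D₁ j *ᵥ u) ⬝ᵥ (C₁ j *ᵥ x + D₁ j *ᵥ u) - ξ j ⬝ᵥ ξ j)) +
        (∑ i, ((C₂ i *ᵥ x + D₂ i *ᵥ u) ⬝ᵥ (C₂ i *ᵥ x + D₂ i *ᵥ u) - η i ⬝ᵥ η i))
      = 2 * ((X *ᵥ x) ⬝ᵥ (A *ᵥ x)) + 2 * ((X *ᵥ x) ⬝ᵥ (B₂ *ᵥ u)) +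
        x ⬝ᵥ (R *ᵥ x) + u ⬝ᵥ (G *ᵥ u) +
        (∑ j, (τ j * ((C₁ j *ᵥ x + D₁ j *ᵥ u) ⬝ᵥ (C₁ j *ᵥ x + D₁ j *ᵥ u)) +
          (2 * (w j ⬝ᵥ ξ j) - τ j * (ξ j ⬝ᵥ ξ j)))) +
        (∑ i, (((C₂ i *ᵥ x + D₂ i *ᵥ u) ⬝ᵥ (C₂ i *ᵥ x + D₂ i *ᵥ u)) +
          (2 * (w' i ⬝ᵥ η i) - η i ⬝ᵥ η i))) := by
    simp only [hwj, hwi, mul_sub, Finset.sum_add_distrib, Finset.sum_sub_distrib, mul_add,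
      Finset.mul_sum]
    ring
  rw [regroup]
  -- bound the sums
  have hsum1 : (∑ j, (τ j * ((C₁ j *ᵥ x + D₁ j *ᵥ u) ⬝ᵥ (C₁ j *ᵥ x + D₁ j *ᵥ u)) +
      (2 * (w j ⬝ᵥ ξ j) - τ j * (ξ j ⬝ᵥ ξ j))))
      ≤ ∑ j, (τ j * ((C₁ j *ᵥ x + D₁ j *ᵥ u) ⬝ᵥ (C₁ j *ᵥ x + D₁ j *ᵥ u)) +
      (τ j)⁻¹ * (w j ⬝ᵥ w j)) :=
    Finset.sum_le_sum fun j _ => by linarith [hjle j]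
  have hsum2 : (∑ i, (((C₂ i *ᵥ x + D₂ i *ᵥ u) ⬝ᵥ (C₂ i *ᵥ x + D₂ i *ᵥ u)) +
      (2 * (w' i ⬝ᵥ η i) - η i ⬝ᵥ η i)))
      ≤ ∑ i, (((C₂ i *ᵥ x + D₂ i *ᵥ u) ⬝ᵥ (C₂ i *ᵥ x + D₂ i *ᵥ u)) +
      (w' i ⬝ᵥ w' i)) :=
    Finset.sum_le_sum fun i _ => by linarith [hile i]
  -- the x-only expression equals zero
  have hT : 2 * ((X *ᵥ x) ⬝ᵥ (A *ᵥ x)) + 2 * ((X *ᵥ x) ⬝ᵥ (B₂ *ᵥ u)) +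
      x ⬝ᵥ (R *ᵥ x) + u ⬝ᵥ (G *ᵥ u) +
      (∑ j, (τ j * ((C₁ j *ᵥ x + D₁ j *ᵥ u) ⬝ᵥ (C₁ j *ᵥ x + D₁ j *ᵥ u)) +
        (τ j)⁻¹ * (w j ⬝ᵥ w j))) +
      (∑ i, (((C₂ i *ᵥ x + D₂ i *ᵥ u) ⬝ᵥ (C₂ i *ᵥ x + D₂ i *ᵥ u)) +
        (w' i ⬝ᵥ w' i))) = 0 := by
    have q1 : 2 * ((X *ᵥ x) ⬝ᵥ (A *ᵥ x)) = x ⬝ᵥ ((Aᵀ * X + X * A) *ᵥ x) :=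
      qform_two hXs A x
    have q2 : 2 * ((X *ᵥ x) ⬝ᵥ (B₂ *ᵥ u)) =
        x ⬝ᵥ (((B₂ * K)ᵀ * X + X * (B₂ * K)) *ᵥ x) := by
      rw [hu, Matrix.mulVec_mulVec]; exact qform_two hXs (B₂ * K) x
    have q3 : u ⬝ᵥ (G *ᵥ u) = x ⬝ᵥ ((Kᵀ * (G * K)) *ᵥ x) := by
      rw [hu]; exact qform_KGK K G x
    have q5 : ∀ j, τ j * ((C₁ j *ᵥ x + D₁ j *ᵥ u) ⬝ᵥ (C₁ j *ᵥ x + D₁ j *ᵥ u)) +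
        (τ j)⁻¹ * (w j ⬝ᵥ w j)
        = x ⬝ᵥ ((τ j • ((C₁ j + D₁ j * K)ᵀ * (C₁ j + D₁ j * K)) +
            (τ j)⁻¹ • (((B₁ j)ᵀ * X)ᵀ * ((B₁ j)ᵀ * X))) *ᵥ x) := by
      intro j
      have hc : C₁ j *ᵥ x + D₁ j *ᵥ u = (C₁ j + D₁ j * K) *ᵥ x := by
        rw [hu, Matrix.mulVec_mulVec, Matrix.add_mulVec]
      have hwv : w j = ((B₁ j)ᵀ * X) *ᵥ x := by
        simp only [hw]; rw [Matrix.mulVec_mulVec]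
      rw [hc, hwv, qform_sq, qform_sq, qform_smul, qform_smul, Matrix.add_mulVec,
        dotProduct_add]
    have q6 : ∀ i, ((C₂ i *ᵥ x + D₂ i *ᵥ u) ⬝ᵥ (C₂ i *ᵥ x + D₂ i *ᵥ u)) +
        (w' i ⬝ᵥ w' i)
        = x ⬝ᵥ ((((C₂ i + D₂ i * K)ᵀ * (C₂ i + D₂ i * K)) +
            (((B₂' i)ᵀ * X)ᵀ * ((B₂' i)ᵀ * X))) *ᵥ x) := by
      intro i
      have hc : C₂ i *ᵥ x + D₂ i *ᵥ u = (C₂ i + D₂ i * K) *ᵥ x := by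
        rw [hu, Matrix.mulVec_mulVec, Matrix.add_mulVec]
      have hwv : w' i = ((B₂' i)ᵀ * X) *ᵥ x := by
        simp only [hw']; rw [Matrix.mulVec_mulVec]
      rw [hc, hwv, qform_sq, qform_sq, Matrix.add_mulVec, dotProduct_add]
    simp only [q5, q6]
    rw [q1, q2, q3, ← dp_sum, ← dp_sum, ← sum_mulVec', ← sum_mulVec']
    have : Aᵀ * X + X * A + ((B₂ * K)ᵀ * X + X * (B₂ * K)) + R + Kᵀ * (G * K) +
        (∑ j, (τ j • ((C₁ j + D₁ j * K)ᵀ * (C₁ j + D₁ j * K)) +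
          (τ j)⁻¹ • (((B₁ j)ᵀ * X)ᵀ * ((B₁ j)ᵀ * X)))) +
        (∑ i, (((C₂ i + D₂ i * K)ᵀ * (C₂ i + D₂ i * K)) +
          (((B₂' i)ᵀ * X)ᵀ * ((B₂' i)ᵀ * X))))
        = Aᵀ * X + X * A + X * Wτ * X + Qτ + (X * B₂ + Lτ) * K +
          Kᵀ * (X * B₂ + Lτ)ᵀ + Kᵀ * Gτ * K := by
      rw [hP, hQτ, hLτ, hGτ, hWτ]
      simp only [Matrix.transpose_add, Matrix.transpose_mul, Matrix.transpose_smul,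
        Matrix.transpose_transpose, Matrix.transpose_sum, hXs, Matrix.mul_add,
        Matrix.add_mul, Matrix.mul_smul, Matrix.smul_mul, Matrix.sum_mul, Matrix.mul_sum,
        Finset.sum_add_distrib, smul_add, Matrix.mul_assoc]
      abel
    have hcomb : ∀ M N : Matrix (Fin n) (Fin n) ℝ,
        x ⬝ᵥ (M *ᵥ x) + x ⬝ᵥ (N *ᵥ x) = x ⬝ᵥ ((M + N) *ᵥ x) := fun M N => by
      rw [Matrix.add_mulVec, dotProduct_add]
    rw [hcomb, hcomb, hcomb, hcomb, hcomb, this, hM0]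
    simp
  linarith [hsum1, hsum2, hT]
end
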